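/- Let q be a prime power, let 𝔽_q be the finite field with q elements, and let k ∈ 𝔽_q. Consider the homogeneous polynomial F_k = x²(x^q y − x y^q) + y²(y^q z − y z^q) + (z² + k x²)(z^q x − z x^q) ∈ 𝔽_q[x,y,z], which vanishes at every 𝔽_q-point of ℙ². Then the curve C_k = {F_k = 0} is smooth at every 𝔽_q-point of ℙ² (i.e., there is no nonzero triple (a,b,c) ∈ 𝔽_q³ at which F_k and all three partial derivatives ∂F_k/∂x, ∂F_k/∂y, ∂F_k/∂z vanish simultaneously) if and only if the polynomial t⁷ + k t³ − 1 has no zeros in 𝔽_q. -/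

import Mathlib

open MvPolynomial

/-- The plane-filling polynomial
`F_k = x²(x^q y − x y^q) + y²(y^q z − y z^q) + (z² + k x²)(z^q x − z x^q)`. -/
noncomputable def planeFillingPoly {F : Type*} [Field F] (q : ℕ) (k : F) :
    MvPolynomial (Fin 3) F :=
  X 0 ^ 2 * (X 0 ^ q * X 1 - X 0 * X 1 ^ q)
    + X 1 ^ 2 * (X 1 ^ q * X 2 - X 1 * X 2 ^ q)
    + (X 2 ^ 2 + C k * X 0 ^ 2) * (X 2 ^ q * X 0 - X 2 * X 0 ^ q)

lemma planeFilling_evals {F : Type*} [Field F] (q : ℕ) (k a b c : F) (hq0 : (q : F) = 0)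
    (ha : a ^ q = a) (hb : b ^ q = b) (hc : c ^ q = c) :
    eval ![a, b, c] (planeFillingPoly q k) = 0 ∧
    eval ![a, b, c] (pderiv 0 (planeFillingPoly q k)) = -(a ^ 2 * b) + c ^ 3 + k * a ^ 2 * c ∧
    eval ![a, b, c] (pderiv 1 (planeFillingPoly q k)) = a ^ 3 - b ^ 2 * c ∧
    eval ![a, b, c] (pderiv 2 (planeFillingPoly q k)) = b ^ 3 - a * c ^ 2 - k * a ^ 3 := by
  refine ⟨?_, ?_, ?_, ?_⟩ <;>
  · simp only [planeFillingPoly, map_add, map_sub, map_mul, map_pow, eval_X, eval_C,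
      Derivation.leibniz, Derivation.leibniz_pow, pderiv_X, Pi.single_apply, map_nsmul,
      smul_eq_mul, map_ofNat, pderiv_C, Matrix.cons_val_zero, Matrix.cons_val_one,
      Matrix.head_cons, Matrix.cons_val_two, Matrix.tail_cons]
    simp [hq0, ha, hb, hc]
    try ring

/-- The curve `C_k = {F_k = 0}` is smooth at every `𝔽_q`-point of `ℙ²` if and only if
`t⁷ + k t³ − 1` has no zeros in `𝔽_q`. -/
theorem smooth_at_Fq_points_iff {F : Type*} [Field F] [Fintype F]
    (q : ℕ) (hq : Fintype.card F = q) (k : F) :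
    (∀ a b c : F, (a, b, c) ≠ (0, 0, 0) →
        ¬ (eval ![a, b, c] (planeFillingPoly q k) = 0 ∧
           eval ![a, b, c] (pderiv 0 (planeFillingPoly q k)) = 0 ∧
           eval ![a, b, c] (pderiv 1 (planeFillingPoly q k)) = 0 ∧
           eval ![a, b, c] (pderiv 2 (planeFillingPoly q k)) = 0)) ↔
      ∀ t : F, t ^ 7 + k * t ^ 3 - 1 ≠ 0 := by
  have hq0 : (q : F) = 0 := by rw [← hq]; exact FiniteField.cast_card_eq_zero F
  have hpow : ∀ a : F, a ^ q = a := by intro a; rw [← hq]; exact FiniteField.pow_card a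
  constructor
  · intro h t ht
    obtain ⟨e0, e1, e2, e3⟩ :=
      planeFilling_evals q k t 1 (t ^ 3) hq0 (hpow t) (hpow 1) (hpow (t ^ 3))
    refine h t 1 (t ^ 3) (by simp) ⟨e0, ?_, ?_, ?_⟩
    · rw [e1]; linear_combination t ^ 2 * ht
    · rw [e2]; ring
    · rw [e3]; linear_combination (-1 : F) * ht
  · rintro h a b c hne ⟨-, h1, h2, h3⟩
    obtain ⟨-, e1, e2, e3⟩ :=
      planeFilling_evals q k a b c hq0 (hpow a) (hpow b) (hpow c)
    rw [e1] at h1; rw [e2] at h2; rw [e3] at h3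
    have ha : a ≠ 0 := by
      rintro rfl
      have hb : b = 0 := by
        have : b ^ 3 = 0 := by linear_combination h3
        exact pow_eq_zero_iff (by norm_num) |>.mp this
      have hc : c = 0 := by
        have : c ^ 3 = 0 := by linear_combination h1
        exact pow_eq_zero_iff (by norm_num) |>.mp this
      exact hne (by simp [hb, hc])
    have hb : b ≠ 0 := by
      rintro rfl
      exact ha (pow_eq_zero_iff (n := 3) (by norm_num) |>.mp (by linear_combination h2))
    have key : a ^ 7 + k * a ^ 3 * b ^ 4 - b ^ 7 = 0 := by
      linear_combination a * (a ^ 3 + b ^ 2 * c) * h2 - b ^ 4 * h3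
    refine h (a / b) ?_
    field_simp
    linear_combination key
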